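/- There is a universal constant c such that for every positive integer n divisible by 3, the partial Approximate-Majority function f on {0,1}^n (f(x) = 0 if |x| ≤ n/3, f(x) = 1 if |x| ≥ 2n/3, undefined otherwise) satisfies rrank(f) ≤ c; that is, its randomized rank is Θ(1). -/
import Mathlib


/-- A deterministic decision tree over `{0,1}^n`: every internal node is labeled
by a query index `i ∈ Fin n` and has exactly two children (a 0-child and a
1-child); every leaf is labeled by an output value. -/
inductive DTree (n : ℕ) : Type where
  | leaf (b : Bool) : DTree n
  | node (i : Fin n) (t0 t1 : DTree n) : DTree n

namespace DTree

/-- On input `x`, from each internal node labeled `i` follow the edge to the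
`x i`-child; output the label of the leaf reached. -/
def eval {n : ℕ} : DTree n → (Fin n → Bool) → Bool
  | leaf b, _ => b
  | node i t0 t1, x => if x i then t1.eval x else t0.eval x

/-- `DTSize`: the total number of nodes of the tree. -/
def size {n : ℕ} : DTree n → ℕ
  | leaf _ => 1
  | node _ t0 t1 => 1 + t0.size + t1.size

/-- The depth: the maximum number of edges on a root-to-leaf path. -/
def depth {n : ℕ} : DTree n → ℕ
  | leaf _ => 0
  | node _ t0 t1 => 1 + max t0.depth t1.depth

/-- The rank of a binary tree: a leaf has rank 0; an internal node whose two
children have ranks `r₁, r₂` has rank `max r₁ r₂` if `r₁ ≠ r₂`, and `r₁ + 1`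
if `r₁ = r₂`. -/
def rank {n : ℕ} : DTree n → ℕ
  | leaf _ => 0
  | node _ t0 t1 => if t0.rank = t1.rank then t0.rank + 1 else max t0.rank t1.rank

end DTree

/-- The decision tree `t` computes the total Boolean function `f`. -/
def ComputesFn {n : ℕ} (t : DTree n) (f : (Fin n → Bool) → Bool) : Prop :=
  ∀ x, t.eval x = f x

/-- The Hamming weight `|x|` of `x ∈ {0,1}^n`. -/
def hammingWeight {n : ℕ} (x : Fin n → Bool) : ℕ :=
  (Finset.univ.filter fun i => x i = true).card

/-- There is a universal constant `c` such that for every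
`n > 0` divisible by 3, the partial Approximate-Majority function on `{0,1}^n`
has randomized rank at most `c`: there is a randomized decision tree (a finitely
supported probability distribution over deterministic decision trees) that, on
every input in the domain, outputs the correct value with probability at least
`2/3`, and every tree in its support has rank at most `c`. -/
theorem approxMaj_rrank_const :
    ∃ c : ℕ, ∀ n : ℕ, 0 < n → 3 ∣ n →
      ∃ (k : ℕ) (T : Fin k → DTree n) (p : Fin k → ℝ),
        (∀ i, 0 ≤ p i) ∧ (∑ i, p i = 1) ∧
        (∀ x : Fin n → Bool, 3 * hammingWeight x ≤ n →
          (2 : ℝ) / 3 ≤ ∑ i ∈ Finset.univ.filter (fun i => (T i).eval x = false), p i) ∧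
        (∀ x : Fin n → Bool, 2 * n ≤ 3 * hammingWeight x →
          (2 : ℝ) / 3 ≤ ∑ i ∈ Finset.univ.filter (fun i => (T i).eval x = true), p i) ∧
        (∀ i, (T i).rank ≤ c) := by
  refine ⟨1, fun n hn _ => ?_⟩
  have hn' : (0 : ℝ) < n := by exact_mod_cast hn
  refine ⟨n, fun i => .node i (.leaf false) (.leaf true), fun _ => 1 / n,
    fun _ => by positivity, ?_, ?_, ?_, ?_⟩
  · rw [Finset.sum_const, Finset.card_univ, Fintype.card_fin, nsmul_eq_mul]
    field_simp
  · intro x hx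
    have hcard : (Finset.univ.filter fun i : Fin n =>
        (DTree.node i (.leaf false) (.leaf true)).eval x = false).card
        = n - hammingWeight x := by
      have h2 := Finset.card_filter_add_card_filter_not
        (s := (Finset.univ : Finset (Fin n))) (p := fun i => x i = true)
      simp only [Finset.card_univ, Fintype.card_fin] at h2
      rw [show (Finset.univ.filter fun i : Fin n =>
          (DTree.node i (.leaf false) (.leaf true)).eval x = false)
          = Finset.univ.filter (fun i => ¬ x i = true) from
        Finset.filter_congr (fun i _ => by cases h : x i <;> simp [DTree.eval, h])]
      unfold hammingWeight at *
      omega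
    rw [Finset.sum_const, hcard, nsmul_eq_mul, mul_one_div,
      div_le_div_iff₀ (by norm_num) hn']
    have hcast : ((n - hammingWeight x : ℕ) : ℝ) = (n : ℝ) - hammingWeight x := by
      have : hammingWeight x ≤ n := by omega
      push_cast [this]; ring
    have hx' : 3 * (hammingWeight x : ℝ) ≤ n := by exact_mod_cast hx
    rw [hcast]; linarith
  · intro x hx
    have hcard : (Finset.univ.filter fun i : Fin n =>
        (DTree.node i (.leaf false) (.leaf true)).eval x = true).card
        = hammingWeight x := by
      unfold hammingWeight
      congr 1
      apply Finset.filter_congr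
      intro i _; cases h : x i <;> simp [DTree.eval, h]
    rw [Finset.sum_const, hcard, nsmul_eq_mul, mul_one_div,
      div_le_div_iff₀ (by norm_num) hn']
    have : (2 : ℝ) * n ≤ 3 * hammingWeight x := by exact_mod_cast hx
    linarith
  · intro i; simp [DTree.rank]
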